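/- arXiv:2101.05169 — 2 statements merged into one kernel-verified Lean document; each statement's English description precedes it below -/
import Mathlib

section
/- Let y and z be integers with y > z ≥ 1 and gcd(y,z) = 1, and let −y/z = [a₀, a₁, …, aₙ] be the negative continued fraction expansion with all aᵢ ≤ −2 (i.e., −y/z = a₀ − 1/(a₁ − 1/(⋯ − 1/aₙ))). Define −y′/z′ = [a₀, …, aₙ₋₁] and −y″/z″ = [a₀, …, aₙ₋₁ + 1] (with y′, y″ ≥ 0, written in lowest terms). Then y = y′ + y″ and z = z′ + z″. -/
/-- The value of a negative (Hirzebruch–Jung) continued fraction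
`[a₀, …, aₙ] = a₀ − 1/(a₁ − 1/(⋯ − 1/aₙ))`. -/
def ncf : List ℤ → ℚ
  | [] => 0
  | [a] => (a : ℚ)
  | a :: l => (a : ℚ) - 1 / ncf l

------------------------------------------------------------------------
-- auxiliary machinery

/-- numerator/denominator pair `(Y, Z)` with `ncf l = -Y/Z`. -/
def ncfFrac : List ℤ → ℤ × ℤ
  | [] => (1, 0)
  | a :: l => (-a * (ncfFrac l).1 - (ncfFrac l).2, (ncfFrac l).1)

lemma ncf_cons (a : ℤ) (t : List ℤ) (ht : t ≠ []) :
    ncf (a :: t) = (a : ℚ) - 1 / ncf t := by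
  cases t with
  | nil => exact absurd rfl ht
  | cons b t' => rfl

lemma ncfFrac_append (l : List ℤ) (b : ℤ) :
    ncfFrac (l ++ [b + 1]) = ncfFrac (l ++ [b]) - ncfFrac l := by
  induction l with
  | nil =>
      apply Prod.ext <;> simp [ncfFrac] <;> ring
  | cons a t ih =>
      show (-a * (ncfFrac (t ++ [b+1])).1 - (ncfFrac (t ++ [b+1])).2, (ncfFrac (t ++ [b+1])).1)
          = (-a * (ncfFrac (t ++ [b])).1 - (ncfFrac (t ++ [b])).2, (ncfFrac (t ++ [b])).1)
            - (-a * (ncfFrac t).1 - (ncfFrac t).2, (ncfFrac t).1)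
      rw [ih]
      apply Prod.ext <;> simp only [Prod.fst_sub, Prod.snd_sub, Prod.mk_sub_mk] <;> ring

lemma ncf_main : ∀ (l : List ℤ) (h : l ≠ []),
    (∀ a ∈ l.dropLast, a ≤ -2) → l.getLast h ≤ -1 →
    1 ≤ (ncfFrac l).2 ∧ (ncfFrac l).2 ≤ (ncfFrac l).1 ∧
      IsCoprime (ncfFrac l).1 (ncfFrac l).2 ∧
      ncf l = -((ncfFrac l).1 : ℚ) / ((ncfFrac l).2 : ℚ)
  | [a], _, _, hlast => by
      simp only [List.getLast_singleton] at hlast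
      refine ⟨le_refl 1, by simp [ncfFrac]; omega, ?_, ?_⟩
      · simpa [ncfFrac] using (isCoprime_one_right (x := -a * 1 - 0))
      · simp [ncfFrac, ncf]
  | a :: b :: t, _, hd, hlast => by
      have ht : (b :: t) ≠ [] := by simp
      have h1 : ∀ x ∈ (b :: t).dropLast, x ≤ -2 := by
        intro x hx
        exact hd x (by simpa [List.dropLast] using List.mem_cons_of_mem a hx)
      have h2 : (b :: t).getLast ht ≤ -1 := by
        simpa [List.getLast_cons] using hlast
      obtain ⟨hZ1, hZY, hcop, hval⟩ := ncf_main (b :: t) ht h1 h2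
      set Y := (ncfFrac (b :: t)).1 with hY
      set Z := (ncfFrac (b :: t)).2 with hZ
      have ha : a ≤ -2 := hd a (by simp [List.dropLast])
      have hY1 : 1 ≤ Y := le_trans hZ1 hZY
      have hfst : (ncfFrac (a :: b :: t)).1 = -a * Y - Z := rfl
      have hsnd : (ncfFrac (a :: b :: t)).2 = Y := rfl
      refine ⟨by omega, by rw [hfst, hsnd]; nlinarith, ?_, ?_⟩
      · rw [hfst, hsnd]
        have : IsCoprime (-Z) Y := (hcop.symm).neg_left
        have := this.add_mul_left_left (-a)
        simpa [sub_eq_add_neg, add_comm, mul_comm] using this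
      · rw [ncf_cons a _ ht, hval, hfst, hsnd]
        have hYQ : (Y : ℚ) ≠ 0 := by positivity
        have hZQ : (Z : ℚ) ≠ 0 := by positivity
        push_cast
        field_simp
        ring_nf

lemma frac_uniq (y z Y Z : ℤ) (hz : 1 ≤ z) (hZ : 1 ≤ Z)
    (hc : IsCoprime y z) (hC : IsCoprime Y Z)
    (h : -(y : ℚ) / z = -(Y : ℚ) / Z) : y = Y ∧ z = Z := by
  have hzQ : (z : ℚ) ≠ 0 := by positivity
  have hZQ : (Z : ℚ) ≠ 0 := by positivity
  have hcross : y * Z = Y * z := by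
    have h2 : (-(y : ℚ)) * Z = (-(Y : ℚ)) * z := (div_eq_div_iff hzQ hZQ).mp h
    have h3 : (y : ℚ) * Z = (Y : ℚ) * z := by linarith
    exact_mod_cast h3
  have hzZ : z ∣ Z := by
    have : z ∣ y * Z := ⟨Y, by linarith [hcross]⟩
    exact (hc.symm).dvd_of_dvd_mul_left this
  have hZz : Z ∣ z := by
    have : Z ∣ Y * z := ⟨y, by linarith [hcross]⟩
    exact (hC.symm).dvd_of_dvd_mul_left this
  have hzz : z = Z := Int.dvd_antisymm (by omega) (by omega) hzZ hZz
  subst hzz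
  exact ⟨mul_right_cancel₀ (by omega : z ≠ 0) hcross, rfl⟩

/-- If `−y/z = [a₀, …, aₙ]` with all `aᵢ ≤ −2`, `y > z ≥ 1` coprime, and
`−y′/z′ = [a₀, …, aₙ₋₁]`, `−y″/z″ = [a₀, …, aₙ₋₁, aₙ + 1]` (lowest terms,
nonnegative numerators), then `y = y′ + y″` and `z = z′ + z″`. -/
theorem stmt5 (L : List ℤ) (hL : L ≠ []) (hlen : 2 ≤ L.length)
    (hle : ∀ a ∈ L, a ≤ -2)
    (y z y' z' y'' z'' : ℤ)
    (hyz : y > z) (hz : z ≥ 1) (hcop : IsCoprime y z)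
    (hval : ncf L = -(y : ℚ) / (z : ℚ))
    (hy' : y' ≥ 0) (hz' : z' ≥ 1) (hcop' : IsCoprime y' z')
    (hval' : ncf L.dropLast = -(y' : ℚ) / (z' : ℚ))
    (hy'' : y'' ≥ 0) (hz'' : z'' ≥ 1) (hcop'' : IsCoprime y'' z'')
    (hval'' : ncf (L.dropLast ++ [L.getLast hL + 1]) = -(y'' : ℚ) / (z'' : ℚ)) :
    y = y' + y'' ∧ z = z' + z'' := by
  set d := L.dropLast with hd
  set b := L.getLast hL with hb
  have hdL : d ++ [b] = L := List.dropLast_append_getLast hL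
  have hdne : d ≠ [] := by
    rw [hd]
    intro h
    have := L.length_dropLast
    rw [h] at this
    simp at this
    omega
  -- properties of L
  have hLd : ∀ a ∈ L.dropLast, a ≤ -2 := fun a ha => hle a (List.dropLast_subset L ha)
  have hLlast : L.getLast hL ≤ -1 := by
    have := hle (L.getLast hL) (L.getLast_mem hL)
    omega
  obtain ⟨hZ1, _, hC, hV⟩ := ncf_main L hL hLd hLlast
  obtain ⟨hyY, hzZ⟩ := frac_uniq y z _ _ hz hZ1 hcop hC (hval.symm.trans hV)
  -- properties of d
  have hdd : ∀ a ∈ d.dropLast, a ≤ -2 := fun a ha =>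
    hle a (List.dropLast_subset L (List.dropLast_subset d ha))
  have hdlast : d.getLast hdne ≤ -1 := by
    have := hle (d.getLast hdne) (List.dropLast_subset L (d.getLast_mem hdne))
    omega
  obtain ⟨hZ1', _, hC', hV'⟩ := ncf_main d hdne hdd hdlast
  obtain ⟨hyY', hzZ'⟩ := frac_uniq y' z' _ _ hz' hZ1' hcop' hC' (hval'.symm.trans hV')
  -- properties of L'' = d ++ [b+1]
  have hne'' : d ++ [b + 1] ≠ [] := by simp
  have hdd'' : ∀ a ∈ (d ++ [b + 1]).dropLast, a ≤ -2 := by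
    intro a ha
    rw [List.dropLast_concat] at ha
    exact hle a (List.dropLast_subset L ha)
  have hb2 : b ≤ -2 := hle _ (L.getLast_mem hL)
  have hlast'' : (d ++ [b + 1]).getLast hne'' ≤ -1 := by
    have he : (d ++ [b + 1]).getLast hne'' = b + 1 := by
      simp [List.getLast_append]
    omega
  obtain ⟨hZ1'', _, hC'', hV''⟩ := ncf_main (d ++ [b + 1]) hne'' hdd'' hlast''
  obtain ⟨hyY'', hzZ''⟩ := frac_uniq y'' z'' _ _ hz'' hZ1'' hcop'' hC''
    (hval''.symm.trans hV'')
  -- the key identity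
  have hkey : ncfFrac (d ++ [b + 1]) = ncfFrac L - ncfFrac d := by
    rw [← hdL]; exact ncfFrac_append d b
  have h1 : (ncfFrac (d ++ [b + 1])).1 = (ncfFrac L).1 - (ncfFrac d).1 := by
    rw [hkey]; rfl
  have h2 : (ncfFrac (d ++ [b + 1])).2 = (ncfFrac L).2 - (ncfFrac d).2 := by
    rw [hkey]; rfl
  refine ⟨?_, ?_⟩
  · rw [hyY, hyY', hyY'', h1]; ring
  · rw [hzZ, hzZ', hzZ'', h2]; ring
end

section
/- Fox derivatives on a free group: let F be the free group on generators x₁, …, xₙ and fix i. There is a unique map ∂/∂xᵢ : F → Z[F] from F to the integral group ring satisfying ∂xⱼ/∂xᵢ = δᵢⱼ and the product rule ∂(uv)/∂xᵢ = ∂u/∂xᵢ + u·∂v/∂xᵢ for all u, v ∈ F. Moreover, this map satisfies ∂(u⁻¹)/∂xᵢ = −u⁻¹·∂u/∂xᵢ and the fundamental identity w − 1 = Σᵢ (∂w/∂xᵢ)(xᵢ − 1) for all w ∈ F. -/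
open MonoidAlgebra

namespace FoxAux

variable (n : ℕ)

abbrev F (n : ℕ) := FreeGroup (Fin n)
abbrev A (n : ℕ) := MonoidAlgebra ℤ (F n)

@[ext] structure FoxPair (n : ℕ) where
  g : F n
  d : A n

variable {n}

noncomputable instance : Mul (FoxPair n) :=
  ⟨fun a b => ⟨a.g * b.g, a.d + MonoidAlgebra.of ℤ (F n) a.g * b.d⟩⟩
noncomputable instance : One (FoxPair n) := ⟨⟨1, 0⟩⟩
noncomputable instance : Inv (FoxPair n) :=
  ⟨fun a => ⟨a.g⁻¹, -(MonoidAlgebra.of ℤ (F n) a.g⁻¹ * a.d)⟩⟩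

@[simp] lemma mul_g (a b : FoxPair n) : (a * b).g = a.g * b.g := rfl
@[simp] lemma mul_d (a b : FoxPair n) :
    (a * b).d = a.d + MonoidAlgebra.of ℤ (F n) a.g * b.d := rfl
@[simp] lemma one_g : (1 : FoxPair n).g = 1 := rfl
@[simp] lemma one_d : (1 : FoxPair n).d = 0 := rfl
@[simp] lemma inv_g (a : FoxPair n) : (a⁻¹).g = a.g⁻¹ := rfl
@[simp] lemma inv_d (a : FoxPair n) :
    (a⁻¹).d = -(MonoidAlgebra.of ℤ (F n) a.g⁻¹ * a.d) := rfl

noncomputable instance : Group (FoxPair n) where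
  mul_assoc a b c := by
    ext
    · simp [mul_assoc]
    · simp only [mul_d, mul_g, map_mul, mul_add, mul_assoc, add_assoc]
  one_mul a := by ext <;> simp
  mul_one a := by ext <;> simp
  inv_mul_cancel a := by ext <;> simp

noncomputable def L (i : Fin n) : F n →* FoxPair n :=
  FreeGroup.lift fun j => ⟨FreeGroup.of j, if i = j then 1 else 0⟩

@[simp] lemma L_of (i j : Fin n) :
    L i (FreeGroup.of j) = ⟨FreeGroup.of j, if i = j then 1 else 0⟩ :=
  FreeGroup.lift_apply_of

lemma L_g (i : Fin n) (w : F n) : (L i w).g = w := by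
  induction w using FreeGroup.induction_on with
  | C1 => simp
  | of j => exact congrArg FoxPair.g (L_of i j)
  | inv_of j ih => rw [map_inv, inv_g, ih]
  | mul u v hu hv => rw [map_mul]; simp [hu, hv]

noncomputable def Dfox (i : Fin n) (w : F n) : A n := (L i w).d

lemma Dfox_of (i j : Fin n) :
    Dfox i (FreeGroup.of j) = if i = j then 1 else 0 := by
  exact congrArg FoxPair.d (L_of i j)

lemma Dfox_mul (i : Fin n) (u v : F n) :
    Dfox i (u * v) = Dfox i u + MonoidAlgebra.of ℤ (F n) u * Dfox i v := by
  simp [Dfox, map_mul, L_g]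

end FoxAux

section Main

open FoxAux

variable {n : ℕ}

lemma fox_one (D : Fin n → F n → A n)
    (hmul : ∀ (i : Fin n) (u v : F n),
      D i (u * v) = D i u + MonoidAlgebra.of ℤ (F n) u * D i v) (i : Fin n) :
    D i 1 = 0 := by
  have h := hmul i 1 1
  simp only [mul_one, map_one, one_mul] at h
  exact (left_eq_add.mp h)

lemma fox_inv (D : Fin n → F n → A n)
    (hmul : ∀ (i : Fin n) (u v : F n),
      D i (u * v) = D i u + MonoidAlgebra.of ℤ (F n) u * D i v)
    (i : Fin n) (u : F n) :
    D i u⁻¹ = -(MonoidAlgebra.of ℤ (F n) u⁻¹ * D i u) := by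
  have h := hmul i u⁻¹ u
  rw [inv_mul_cancel, fox_one D hmul] at h
  have := congrArg (fun x => x - D i u⁻¹) h
  simp only [zero_sub, add_sub_cancel_left] at this
  rw [← this, neg_neg]

lemma fox_fund (D : Fin n → F n → A n)
    (hof : ∀ i j : Fin n, D i (FreeGroup.of j) = if i = j then 1 else 0)
    (hmul : ∀ (i : Fin n) (u v : F n),
      D i (u * v) = D i u + MonoidAlgebra.of ℤ (F n) u * D i v)
    (w : F n) :
    MonoidAlgebra.of ℤ (F n) w - 1 =
      ∑ i : Fin n, D i w * (MonoidAlgebra.of ℤ (F n) (FreeGroup.of i) - 1) := by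
  induction w using FreeGroup.induction_on with
  | C1 => simp only [map_one, sub_self, fox_one D hmul, zero_mul, Finset.sum_const_zero]
  | of j =>
    show MonoidAlgebra.of ℤ (F n) (FreeGroup.of j) - 1 =
      ∑ i : Fin n, D i (FreeGroup.of j) * (MonoidAlgebra.of ℤ (F n) (FreeGroup.of i) - 1)
    have hof' : ∀ i : Fin n, D i (pure j : F n) = if i = j then 1 else 0 := fun i => hof i j
    rw [Finset.sum_eq_single j]
    · rw [hof j j, if_pos rfl, one_mul]
    · intro i _ hij
      rw [hof i j, if_neg hij, zero_mul]
    · simp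
  | inv_of j ih =>
    replace ih : MonoidAlgebra.of ℤ (F n) (FreeGroup.of j) - 1 =
      ∑ i : Fin n, D i (FreeGroup.of j) * (MonoidAlgebra.of ℤ (F n) (FreeGroup.of i) - 1) := ih
    show MonoidAlgebra.of ℤ (F n) (FreeGroup.of j)⁻¹ - 1 =
      ∑ i : Fin n, D i (FreeGroup.of j)⁻¹ * (MonoidAlgebra.of ℤ (F n) (FreeGroup.of i) - 1)
    calc MonoidAlgebra.of ℤ (F n) (FreeGroup.of j)⁻¹ - 1
        = -(MonoidAlgebra.of ℤ (F n) (FreeGroup.of j)⁻¹ *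
            (MonoidAlgebra.of ℤ (F n) (FreeGroup.of j) - 1)) := by
          rw [mul_sub, mul_one, ← map_mul, inv_mul_cancel, map_one, neg_sub]
      _ = ∑ i : Fin n, D i (FreeGroup.of j)⁻¹ *
            (MonoidAlgebra.of ℤ (F n) (FreeGroup.of i) - 1) := by
          rw [ih, Finset.mul_sum, ← Finset.sum_neg_distrib]
          refine Finset.sum_congr rfl fun i _ => ?_
          rw [fox_inv D hmul, neg_mul, mul_assoc]
  | mul u v hu hv =>
    calc MonoidAlgebra.of ℤ (F n) (u * v) - 1
        = (MonoidAlgebra.of ℤ (F n) u - 1) +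
          MonoidAlgebra.of ℤ (F n) u * (MonoidAlgebra.of ℤ (F n) v - 1) := by
          rw [map_mul, mul_sub, mul_one]; abel
      _ = ∑ i : Fin n, D i (u * v) *
            (MonoidAlgebra.of ℤ (F n) (FreeGroup.of i) - 1) := by
          rw [hu, hv, Finset.mul_sum, ← Finset.sum_add_distrib]
          refine Finset.sum_congr rfl fun i _ => ?_
          rw [hmul, add_mul, mul_assoc]

end Main

/-- Fox derivatives on the free group `F` on `x₁, …, xₙ`: there is a unique family of maps
`∂/∂xᵢ : F → ℤ[F]` satisfying `∂xⱼ/∂xᵢ = δᵢⱼ` and the product rule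
`∂(uv)/∂xᵢ = ∂u/∂xᵢ + u·∂v/∂xᵢ`. Moreover any such family satisfies
`∂(u⁻¹)/∂xᵢ = −u⁻¹·∂u/∂xᵢ` and the fundamental identity
`w − 1 = Σᵢ (∂w/∂xᵢ)(xᵢ − 1)`. -/
theorem stmt9 (n : ℕ) :
    (∃! D : Fin n → FreeGroup (Fin n) → MonoidAlgebra ℤ (FreeGroup (Fin n)),
      (∀ i j : Fin n, D i (FreeGroup.of j) =
        if i = j then (1 : MonoidAlgebra ℤ (FreeGroup (Fin n))) else 0) ∧
      (∀ (i : Fin n) (u v : FreeGroup (Fin n)),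
        D i (u * v) = D i u + MonoidAlgebra.of ℤ (FreeGroup (Fin n)) u * D i v)) ∧
    (∀ D : Fin n → FreeGroup (Fin n) → MonoidAlgebra ℤ (FreeGroup (Fin n)),
      ((∀ i j : Fin n, D i (FreeGroup.of j) =
        if i = j then (1 : MonoidAlgebra ℤ (FreeGroup (Fin n))) else 0) ∧
       (∀ (i : Fin n) (u v : FreeGroup (Fin n)),
        D i (u * v) = D i u + MonoidAlgebra.of ℤ (FreeGroup (Fin n)) u * D i v)) →
      (∀ (i : Fin n) (u : FreeGroup (Fin n)),
        D i u⁻¹ = -(MonoidAlgebra.of ℤ (FreeGroup (Fin n)) u⁻¹ * D i u)) ∧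
      (∀ w : FreeGroup (Fin n),
        MonoidAlgebra.of ℤ (FreeGroup (Fin n)) w - 1 =
          ∑ i : Fin n, D i w * (MonoidAlgebra.of ℤ (FreeGroup (Fin n)) (FreeGroup.of i) - 1))) := by
  constructor
  · refine ⟨FoxAux.Dfox, ⟨FoxAux.Dfox_of, FoxAux.Dfox_mul⟩, ?_⟩
    rintro D ⟨hof, hmul⟩
    funext i w
    induction w using FreeGroup.induction_on with
    | C1 => rw [fox_one D hmul, fox_one FoxAux.Dfox FoxAux.Dfox_mul]
    | of j => exact (hof i j).trans (FoxAux.Dfox_of i j).symm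
    | inv_of j ih => rw [fox_inv D hmul, fox_inv FoxAux.Dfox FoxAux.Dfox_mul, ih]
    | mul u v hu hv => rw [hmul, FoxAux.Dfox_mul, hu, hv]
  · rintro D ⟨hof, hmul⟩
    exact ⟨fox_inv D hmul, fox_fund D hof hmul⟩
end
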